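/- Let λ > 1. Define w(a,b,c) = v'(a,b,c) + v'(s(a,b,c)) where v'(a,b,c) = aλ(λ−1)(1 + 1/λ² + 1/(λ−1)²) evaluated with λ the positive root of ax²+bx+c, and s(a,b,c) = (a,−2a−b,a+b+c). Then for (a,b,c) ∈ ℤ³ with b²−4ac = D nonsquare, a > 0, c < 0, a+b+c < 0, one has w(a,b,c) = 4a + b + b²/a + ab/c − 2c − a(2a+b)/(a+b+c), an identity of rational numbers. -/

import Mathlib

/-- With `λ` the positive root of `aX² + bX + c` and `μ` the positive root of
`aX² + (−2a−b)X + (a+b+c)` (the quadratic of `s(a,b,c) = (a, −2a−b, a+b+c)`),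
setting `v'(a, λ) = aλ(λ−1)(1 + 1/λ² + 1/(λ−1)²)`, one has
`w = v'(a,λ) + v'(a,μ) = 4a + b + b²/a + ab/c − 2c − a(2a+b)/(a+b+c)`. -/
theorem w_formula (D a b c : ℤ) (hD : b ^ 2 - 4 * a * c = D) (hDpos : 0 < D)
    (hns : ¬ IsSquare D) (ha : 0 < a) (hc : c < 0) (habc : a + b + c < 0)
    (lam mu : ℝ) (hlam : 0 < lam) (hmu : 0 < mu)
    (hlroot : (a : ℝ) * lam ^ 2 + (b : ℝ) * lam + (c : ℝ) = 0)
    (hmroot : (a : ℝ) * mu ^ 2 + ((-2 : ℝ) * a - b) * mu + ((a : ℝ) + b + c) = 0) :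
    (a : ℝ) * lam * (lam - 1) * (1 + 1 / lam ^ 2 + 1 / (lam - 1) ^ 2) +
      (a : ℝ) * mu * (mu - 1) * (1 + 1 / mu ^ 2 + 1 / (mu - 1) ^ 2) =
    4 * a + b + (b : ℝ) ^ 2 / a + (a : ℝ) * b / c - 2 * c -
      (a : ℝ) * (2 * a + b) / ((a : ℝ) + b + c) := by
  have haR : (0:ℝ) < (a:ℝ) := by exact_mod_cast ha
  have hcR : (c:ℝ) < 0 := by exact_mod_cast hc
  have habcR : (a:ℝ) + b + c < 0 := by
    have : ((a + b + c : ℤ) : ℝ) < 0 := by exact_mod_cast habc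
    push_cast at this; linarith
  -- lam > 1 by convexity
  have hl1 : 1 < lam := by
    by_contra h
    push_neg at h
    nlinarith [mul_pos haR (mul_pos hlam hlam), mul_nonneg (le_of_lt haR)
      (mul_nonneg (le_of_lt hlam) (sub_nonneg.mpr h)),
      mul_pos hlam (neg_pos.mpr habcR), mul_nonneg (sub_nonneg.mpr h) (le_of_lt (neg_pos.mpr hcR))]
  -- mu > 1 by convexity
  have hm1 : 1 < mu := by
    by_contra h
    push_neg at h
    nlinarith [mul_nonneg (le_of_lt haR) (mul_nonneg (le_of_lt hmu) (sub_nonneg.mpr h)),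
      mul_pos hmu (neg_pos.mpr hcR), mul_nonneg (sub_nonneg.mpr h) (le_of_lt (neg_pos.mpr habcR))]
  -- 1 - mu is a root of the original quadratic
  have h1m : (a:ℝ) * (1 - mu) ^ 2 + (b:ℝ) * (1 - mu) + (c:ℝ) = 0 := by
    linear_combination hmroot
  have hne : lam + mu - 1 ≠ 0 := ne_of_gt (by linarith)
  have key : (lam + mu - 1) * ((a:ℝ) * (lam + 1 - mu) + b) = 0 := by
    linear_combination hlroot - h1m
  have E1 : (a:ℝ) * (lam + 1 - mu) + b = 0 := by
    rcases mul_eq_zero.mp key with h | h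
    · exact absurd h hne
    · exact h
  have E2 : (a:ℝ) * lam * (mu - 1) + c = 0 := by
    linear_combination hlroot - lam * E1
  have hb : (b:ℝ) = (a:ℝ) * (mu - 1 - lam) := by linarith
  have hcc : (c:ℝ) = -((a:ℝ) * lam * (mu - 1)) := by linarith
  have haR' : (a:ℝ) ≠ 0 := ne_of_gt haR
  have hlam0 : lam ≠ 0 := ne_of_gt hlam
  have hmu0 : mu ≠ 0 := ne_of_gt hmu
  have hlam1 : lam - 1 ≠ 0 := ne_of_gt (by linarith)
  have hmu1 : mu - 1 ≠ 0 := ne_of_gt (by linarith)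
  rw [hb, hcc]
  have hden1 : -((a:ℝ) * lam * (mu - 1)) ≠ 0 := by
    have : (0:ℝ) < (a:ℝ) * lam * (mu - 1) := by
      apply mul_pos (mul_pos haR hlam); linarith
    exact ne_of_lt (by linarith)
  have hden2 : (a:ℝ) + (a:ℝ) * (mu - 1 - lam) + -((a:ℝ) * lam * (mu - 1)) ≠ 0 := by
    have : (a:ℝ) + (a:ℝ) * (mu - 1 - lam) + -((a:ℝ) * lam * (mu - 1)) =
        -((a:ℝ) * mu * (lam - 1)) := by ring
    rw [this]
    have h2 : (0:ℝ) < (a:ℝ) * mu * (lam - 1) := by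
      apply mul_pos (mul_pos haR hmu); linarith
    exact ne_of_lt (by linarith)
  have hden3 : (a:ℝ) + (a:ℝ) * (mu - 1 - lam) + -((a:ℝ) * lam * (mu - 1)) =
      -((a:ℝ) * mu * (lam - 1)) := by ring
  rw [hden3]
  field_simp
  ring
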